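/- Let ν be a positive measure on the cone Pos_q of positive semidefinite Hermitian q×q matrices such that the Laplace transform ∫ exp(-tr(XT)) dν(X) converges for all T with T+T* > 0. Then the kernel K(T,S) := ∫_{Pos_q} exp(-tr(X(T*+S))) dν(X) on the Siegel wedge W_q = {T : T+T* > 0} is positive definite. In particular, if det(T)^{-α} is such a Laplace transform, then (T,S) ↦ det(T*+S)^{-α} is a positive definite kernel on W_q. -/
import Mathlib

open Matrix MeasureTheory
open scoped ComplexOrder

/-- A positive definite kernel on a subset `W` of `M`: Hermitian symmetric on `W`,
with all finite quadratic forms built from points of `W` nonnegative. -/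
def IsPosDefKernelOn {M : Type*} (W : Set M) (K : M → M → ℂ) : Prop :=
  (∀ T ∈ W, ∀ S ∈ W, K T S = (starRingEnd ℂ) (K S T)) ∧
  ∀ (n : ℕ) (T : Fin n → M), (∀ i, T i ∈ W) → ∀ w : Fin n → ℂ,
    0 ≤ (∑ i, ∑ j, K (T i) (T j) * w i * (starRingEnd ℂ) (w j)).re

private lemma conj_exp_trace {q : ℕ} (X : selfAdjoint (Matrix (Fin q) (Fin q) ℂ))
    (T : Matrix (Fin q) (Fin q) ℂ) :
    (starRingEnd ℂ) (Complex.exp (-((X.val * T).trace))) =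
      Complex.exp (-((X.val * Tᴴ).trace)) := by
  rw [← Complex.exp_conj, map_neg]
  congr 1
  rw [neg_inj]
  have hX : X.valᴴ = X.val := X.prop
  calc (starRingEnd ℂ) (X.val * T).trace = ((X.val * T)ᴴ).trace := by
        rw [Matrix.trace_conjTranspose]; rfl
    _ = (Tᴴ * X.val).trace := by rw [Matrix.conjTranspose_mul, hX]
    _ = (X.val * Tᴴ).trace := Matrix.trace_mul_comm _ _

private lemma mem_wedge {q : ℕ} {T S : Matrix (Fin q) (Fin q) ℂ}
    (hT : (T + Tᴴ).PosDef) (hS : (S + Sᴴ).PosDef) :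
    ((Tᴴ + S) + (Tᴴ + S)ᴴ).PosDef := by
  have h : (Tᴴ + S) + (Tᴴ + S)ᴴ = (T + Tᴴ) + (S + Sᴴ) := by
    rw [Matrix.conjTranspose_add, Matrix.conjTranspose_conjTranspose]
    abel
  rw [h]
  exact hT.add hS

private lemma exp_trace_mul_add {q : ℕ} (X : selfAdjoint (Matrix (Fin q) (Fin q) ℂ))
    (T S : Matrix (Fin q) (Fin q) ℂ) :
    Complex.exp (-((X.val * (T + S)).trace)) =
      Complex.exp (-((X.val * T).trace)) * Complex.exp (-((X.val * S).trace)) := by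
  rw [mul_add, Matrix.trace_add, neg_add, Complex.exp_add]

private lemma kernel_congr_on {M : Type*} {W : Set M} {K K' : M → M → ℂ}
    (h : ∀ T ∈ W, ∀ S ∈ W, K T S = K' T S) (hK : IsPosDefKernelOn W K) :
    IsPosDefKernelOn W K' := by
  obtain ⟨hsym, hpos⟩ := hK
  constructor
  · intro T hT S hS
    rw [← h T hT S hS, ← h S hS T hT]
    exact hsym T hT S hS
  · intro n T hT w
    have : ∑ i, ∑ j, K' (T i) (T j) * w i * (starRingEnd ℂ) (w j)
        = ∑ i, ∑ j, K (T i) (T j) * w i * (starRingEnd ℂ) (w j) := by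
      refine Finset.sum_congr rfl fun i _ => Finset.sum_congr rfl fun j _ => ?_
      rw [h (T i) (hT i) (T j) (hT j)]
    rw [this]
    exact hpos n T hT w

theorem laplace_transform_posDef_kernel {q : ℕ}
    [MeasurableSpace (selfAdjoint (Matrix (Fin q) (Fin q) ℂ))]
    (ν : Measure (selfAdjoint (Matrix (Fin q) (Fin q) ℂ))) (α : ℝ)
    (hconv : ∀ T : Matrix (Fin q) (Fin q) ℂ, (T + Tᴴ).PosDef →
      IntegrableOn
        (fun X : selfAdjoint (Matrix (Fin q) (Fin q) ℂ) =>
          Complex.exp (-((X.val * T).trace)))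
        {X : selfAdjoint (Matrix (Fin q) (Fin q) ℂ) | X.val.PosSemidef} ν) :
    IsPosDefKernelOn {T : Matrix (Fin q) (Fin q) ℂ | (T + Tᴴ).PosDef}
      (fun T S => ∫ X in {X : selfAdjoint (Matrix (Fin q) (Fin q) ℂ) | X.val.PosSemidef},
        Complex.exp (-((X.val * (Tᴴ + S)).trace)) ∂ν) ∧
    ((∀ T : Matrix (Fin q) (Fin q) ℂ, (T + Tᴴ).PosDef →
        T.det ^ (-(α : ℂ)) =
          ∫ X in {X : selfAdjoint (Matrix (Fin q) (Fin q) ℂ) | X.val.PosSemidef},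
            Complex.exp (-((X.val * T).trace)) ∂ν) →
      IsPosDefKernelOn {T : Matrix (Fin q) (Fin q) ℂ | (T + Tᴴ).PosDef}
        (fun T S => (Tᴴ + S).det ^ (-(α : ℂ)))) := by
  set P : Set (selfAdjoint (Matrix (Fin q) (Fin q) ℂ)) :=
    {X | X.val.PosSemidef} with hPdef
  have hmain : IsPosDefKernelOn {T : Matrix (Fin q) (Fin q) ℂ | (T + Tᴴ).PosDef}
      (fun T S => ∫ X in P, Complex.exp (-((X.val * (Tᴴ + S)).trace)) ∂ν) := by
    constructor
    · -- Hermitian symmetry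
      intro T hT S hS
      show (∫ X in P, Complex.exp (-((X.val * (Tᴴ + S)).trace)) ∂ν)
        = (starRingEnd ℂ) (∫ X in P, Complex.exp (-((X.val * (Sᴴ + T)).trace)) ∂ν)
      rw [← integral_conj]
      congr 1
      funext X
      rw [conj_exp_trace]
      congr 2
      rw [Matrix.conjTranspose_add, Matrix.conjTranspose_conjTranspose, add_comm]
    · -- positivity of quadratic forms
      intro n T hT w
      set f : Fin n → selfAdjoint (Matrix (Fin q) (Fin q) ℂ) → ℂ :=
        fun i X => Complex.exp (-((X.val * T i).trace)) with hf
      have hfun : ∀ i j, (fun X : selfAdjoint (Matrix (Fin q) (Fin q) ℂ) =>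
            Complex.exp (-((X.val * ((T i)ᴴ + T j)).trace)))
          = fun X => (starRingEnd ℂ) (f i X) * f j X := by
        intro i j
        funext X
        rw [exp_trace_mul_add, conj_exp_trace]
      -- the summand functions and their integrability
      set g : Fin n → Fin n → selfAdjoint (Matrix (Fin q) (Fin q) ℂ) → ℂ :=
        fun i j X => (w i * (starRingEnd ℂ) (w j)) •
          ((starRingEnd ℂ) (f i X) * f j X) with hg
      have hint : ∀ i j, Integrable (g i j) (ν.restrict P) := by
        intro i j
        have h1 : IntegrableOn (fun X => (starRingEnd ℂ) (f i X) * f j X) P ν := by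
          rw [← hfun i j]
          exact hconv ((T i)ᴴ + T j) (mem_wedge (hT i) (hT j))
        exact h1.const_mul _
      -- step 1: rewrite each term of the double sum as an integral
      have hterm : ∀ i j, (∫ X in P, Complex.exp (-((X.val * ((T i)ᴴ + T j)).trace)) ∂ν)
            * w i * (starRingEnd ℂ) (w j)
          = ∫ X in P, g i j X ∂ν := by
        intro i j
        rw [hfun i j, hg]
        rw [integral_smul]
        simp only [smul_eq_mul]
        ring
      have hsum : ∑ i, ∑ j, (∫ X in P,
              Complex.exp (-((X.val * ((T i)ᴴ + T j)).trace)) ∂ν)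
            * w i * (starRingEnd ℂ) (w j)
          = ∫ X in P, ∑ i, ∑ j, g i j X ∂ν := by
        calc ∑ i, ∑ j, (∫ X in P,
              Complex.exp (-((X.val * ((T i)ᴴ + T j)).trace)) ∂ν)
                * w i * (starRingEnd ℂ) (w j)
            = ∑ i, ∑ j, ∫ X in P, g i j X ∂ν :=
              Finset.sum_congr rfl fun i _ => Finset.sum_congr rfl fun j _ => hterm i j
          _ = ∑ i, ∫ X in P, ∑ j, g i j X ∂ν :=
              Finset.sum_congr rfl fun i _ =>
                (integral_finset_sum _ fun j _ => hint i j).symm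
          _ = ∫ X in P, ∑ i, ∑ j, g i j X ∂ν :=
              (integral_finset_sum _ fun i _ =>
                integrable_finset_sum _ fun j _ => hint i j).symm
      -- step 2: the pointwise sum is |h X|^2
      set h : selfAdjoint (Matrix (Fin q) (Fin q) ℂ) → ℂ :=
        fun X => ∑ i, (starRingEnd ℂ) (w i) * f i X with hh
      have hpt : ∀ X, ∑ i, ∑ j, g i j X = ((Complex.normSq (h X) : ℝ) : ℂ) := by
        intro X
        have h1 : (starRingEnd ℂ) (h X) * h X
            = ∑ i, ∑ j, g i j X := by
          rw [hh]
          simp only [map_sum]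
          rw [Finset.sum_mul_sum]
          refine Finset.sum_congr rfl fun i _ => Finset.sum_congr rfl fun j _ => ?_
          simp only [hg, smul_eq_mul, _root_.map_mul, Complex.conj_conj]
          ring
        rw [← h1, mul_comm, Complex.mul_conj]
      have hpt' : (∫ X in P, ∑ i, ∑ j, g i j X ∂ν)
          = ((∫ X in P, Complex.normSq (h X) ∂ν : ℝ) : ℂ) := by
        rw [integral_congr_ae (Filter.Eventually.of_forall fun X => hpt X)]
        exact integral_ofReal
      rw [hsum, hpt']
      simpa using integral_nonneg fun X => Complex.normSq_nonneg (h X)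
  refine ⟨hmain, fun hdet => ?_⟩
  refine kernel_congr_on (fun T hT S hS => ?_) hmain
  exact (hdet (Tᴴ + S) (mem_wedge hT hS)).symm
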